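/- Let P be a nonzero polynomial in n variables over ℝ (P : MvPolynomial (Fin n) ℝ, P ≠ 0), and let f : ℝⁿ → ℝ be smooth and compactly supported. If f satisfies the constant-coefficient linear PDE determined by P, i.e. for every x ∈ ℝⁿ, Σ_{k ∈ support P} (coeff of P at k) · (∂^k f)(x) = 0, then f = 0. (Equivalently: a nonzero constant-coefficient linear differential operator has no nonzero smooth compactly supported solutions.) -/

import Mathlib

/-- The partial derivative in the `j`-th coordinate direction. -/
noncomputable def pd {n : ℕ} (j : Fin n) (f : EuclideanSpace ℝ (Fin n) → ℝ) :
    EuclideanSpace ℝ (Fin n) → ℝ :=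
  fun x => fderiv ℝ f x (EuclideanSpace.single j 1)

/-- The iterated mixed partial derivative `∂^k f` for a multi-index `k : Fin n → ℕ`:
for each coordinate `j` apply the `j`-th partial derivative `k j` times. -/
noncomputable def mpd {n : ℕ} (k : Fin n → ℕ) (f : EuclideanSpace ℝ (Fin n) → ℝ) :
    EuclideanSpace ℝ (Fin n) → ℝ :=
  (List.finRange n).foldr (fun j g => (pd j)^[k j] g) f

open MeasureTheory Complex Real FourierTransform
open scoped RealInnerProductSpace

variable {n : ℕ}
abbrev E (n : ℕ) := EuclideanSpace ℝ (Fin n)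

lemma pd_contDiff {j : Fin n} {f : E n → ℝ} (hf : ContDiff ℝ (⊤ : ℕ∞) f) :
    ContDiff ℝ (⊤ : ℕ∞) (pd j f) := by
  exact (ContinuousLinearMap.apply ℝ ℝ (EuclideanSpace.single j (1:ℝ))).contDiff.comp
    (hf.fderiv_right (by simp))

lemma pd_compSupp {j : Fin n} {f : E n → ℝ} (hs : HasCompactSupport f) :
    HasCompactSupport (pd j f) := by
  exact (hs.fderiv ℝ).comp_left (g := fun L : (E n →L[ℝ] ℝ) => L (EuclideanSpace.single j 1)) rfl

-- complexification
lemma fderiv_ofReal_comp {f : E n → ℝ} (hf : ContDiff ℝ (⊤ : ℕ∞) f) (x : E n) (v : E n) :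
    fderiv ℝ (fun x => (f x : ℂ)) x v = (fderiv ℝ f x v : ℂ) := by
  have : HasFDerivAt (fun x => (f x : ℂ)) (Complex.ofRealCLM.comp (fderiv ℝ f x)) x :=
    Complex.ofRealCLM.hasFDerivAt.comp x (hf.differentiable (by simp) x).hasFDerivAt
  rw [this.fderiv]; rfl

lemma nice_ofReal {f : E n → ℝ} (hf : ContDiff ℝ (⊤ : ℕ∞) f) :
    ContDiff ℝ (⊤ : ℕ∞) (fun x => (f x : ℂ)) :=
  Complex.ofRealCLM.contDiff.comp hf

lemma fourier_pd {j : Fin n} {g : E n → ℝ} (hg : ContDiff ℝ (⊤ : ℕ∞) g)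
    (hs : HasCompactSupport g) (ξ : E n) :
    𝓕 (fun x => (pd j g x : ℂ)) ξ = (2 * π * I * (ξ j : ℂ)) * 𝓕 (fun x => (g x : ℂ)) ξ := by
  set G : E n → ℂ := fun x => (g x : ℂ) with hG
  have hGc : ContDiff ℝ (⊤ : ℕ∞) G := nice_ofReal hg
  have hGs : HasCompactSupport G := hs.comp_left (g := fun r : ℝ => (r : ℂ)) rfl
  have hGi : Integrable G := (hGc.continuous).integrable_of_hasCompactSupport hGs
  have hdc : Continuous (fderiv ℝ G) := (hGc.fderiv_right (m := (⊤ : ℕ∞)) (by simp)).continuous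
  have hdi : Integrable (fderiv ℝ G) :=
    hdc.integrable_of_hasCompactSupport (hGs.fderiv ℝ)
  have h1 : (fun x => (pd j g x : ℂ)) = fun x => fderiv ℝ G x (EuclideanSpace.single j 1) := by
    funext x; rw [fderiv_ofReal_comp hg]; rfl
  rw [h1, ← Real.fourier_continuousLinearMap_apply hdi,
    Real.fourier_fderiv hGi (hGc.differentiable (by simp)) hdi]
  simp only [VectorFourier.fourierSMulRight_apply, ContinuousLinearMap.neg_apply, innerSL_apply_apply]
  rw [innerSL_apply_apply, real_inner_comm, EuclideanSpace.inner_single_left]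
  push_cast
  simp [smul_eq_mul]
  ring

lemma iter_nice {j : Fin n} {g : E n → ℝ} (hg : ContDiff ℝ (⊤ : ℕ∞) g)
    (hs : HasCompactSupport g) (m : ℕ) :
    ContDiff ℝ (⊤ : ℕ∞) ((pd j)^[m] g) ∧ HasCompactSupport ((pd j)^[m] g) := by
  induction m with
  | zero => exact ⟨hg, hs⟩
  | succ m ih =>
    rw [Function.iterate_succ_apply']
    exact ⟨pd_contDiff ih.1, pd_compSupp ih.2⟩

lemma fourier_iter {j : Fin n} {g : E n → ℝ} (hg : ContDiff ℝ (⊤ : ℕ∞) g)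
    (hs : HasCompactSupport g) (m : ℕ) (ξ : E n) :
    𝓕 (fun x => (((pd j)^[m] g) x : ℂ)) ξ
      = (2 * π * I * (ξ j : ℂ))^m * 𝓕 (fun x => (g x : ℂ)) ξ := by
  induction m with
  | zero => simp
  | succ m ih =>
    rw [Function.iterate_succ_apply',
      fourier_pd (iter_nice hg hs m).1 (iter_nice hg hs m).2, ih, pow_succ]
    ring

lemma fold_nice {f : E n → ℝ} (hf : ContDiff ℝ (⊤ : ℕ∞) f) (hs : HasCompactSupport f)
    (k : Fin n → ℕ) (l : List (Fin n)) :
    ContDiff ℝ (⊤ : ℕ∞) (l.foldr (fun j g => (pd j)^[k j] g) f) ∧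
      HasCompactSupport (l.foldr (fun j g => (pd j)^[k j] g) f) := by
  induction l with
  | nil => exact ⟨hf, hs⟩
  | cons j l ih => exact iter_nice ih.1 ih.2 (k j)

lemma fourier_fold {f : E n → ℝ} (hf : ContDiff ℝ (⊤ : ℕ∞) f) (hs : HasCompactSupport f)
    (k : Fin n → ℕ) (l : List (Fin n)) (ξ : E n) :
    𝓕 (fun x => ((l.foldr (fun j g => (pd j)^[k j] g) f) x : ℂ)) ξ
      = (l.map (fun j => (2 * π * I * (ξ j : ℂ))^(k j))).prod * 𝓕 (fun x => (f x : ℂ)) ξ := by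
  induction l with
  | nil => simp
  | cons j l ih =>
    rw [List.foldr_cons, fourier_iter (fold_nice hf hs k l).1 (fold_nice hf hs k l).2,
      ih, List.map_cons, List.prod_cons]
    ring

lemma fourier_mpd {f : E n → ℝ} (hf : ContDiff ℝ (⊤ : ℕ∞) f) (hs : HasCompactSupport f)
    (k : Fin n → ℕ) (ξ : E n) :
    𝓕 (fun x => ((mpd k f) x : ℂ)) ξ
      = (∏ j, (2 * π * I * (ξ j : ℂ))^(k j)) * 𝓕 (fun x => (f x : ℂ)) ξ := by
  rw [mpd, fourier_fold hf hs, Fin.prod_univ_def]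

lemma fourier_sum {ι : Type*} (s : Finset ι) (g : ι → E n → ℂ)
    (hg : ∀ i ∈ s, Integrable (g i)) (ξ : E n) :
    𝓕 (fun x => ∑ i ∈ s, g i x) ξ = ∑ i ∈ s, 𝓕 (g i) ξ := by
  rw [Real.fourier_eq]
  rw [show (fun v => 𝐞 (-⟪v, ξ⟫) • ∑ i ∈ s, g i v)
      = fun v => ∑ i ∈ s, 𝐞 (-⟪v, ξ⟫) • g i v by funext v; rw [Finset.smul_sum]]
  rw [MeasureTheory.integral_finset_sum]
  · rfl
  · exact fun i hi => (Real.fourierIntegral_convergent_iff ξ).2 (hg i hi)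

lemma fourier_const_mul (c : ℂ) (g : E n → ℂ) (ξ : E n) :
    𝓕 (fun x => c * g x) ξ = c * 𝓕 g ξ := by
  rw [Real.fourier_eq, Real.fourier_eq, ← MeasureTheory.integral_const_mul]
  congr 1; funext v
  simp only [Circle.smul_def, smul_eq_mul]
  ring

noncomputable def Qp {n : ℕ} (P : MvPolynomial (Fin n) ℝ) (ξ : E n) : ℂ :=
  ∑ k ∈ P.support, ((P.coeff k : ℝ) : ℂ) * ∏ j, (2 * π * I * (ξ j : ℂ)) ^ (k j)

noncomputable def Rp {n : ℕ} (P : MvPolynomial (Fin n) ℝ) : MvPolynomial (Fin n) ℂ :=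
  MvPolynomial.aeval (fun j => MvPolynomial.C (2 * π * I) * MvPolynomial.X j)
    (P.map Complex.ofRealHom)

lemma aeval_eq_eval (x : Fin n → ℂ) (p : MvPolynomial (Fin n) ℂ) :
    MvPolynomial.aeval x p = MvPolynomial.eval x p := by
  rw [MvPolynomial.aeval_def, MvPolynomial.eval, Algebra.algebraMap_self]
  rfl

lemma Qp_eq_eval (P : MvPolynomial (Fin n) ℝ) (ξ : E n) :
    Qp P ξ = MvPolynomial.eval (fun j => ((ξ j : ℝ) : ℂ)) (Rp P) := by
  have h1 : Qp P ξ = MvPolynomial.eval₂ Complex.ofRealHom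
      (fun j => 2 * π * I * (ξ j : ℂ)) P := by
    rw [MvPolynomial.eval₂_eq']
    simp [Qp]
  have h2 : MvPolynomial.eval (fun j => ((ξ j : ℝ) : ℂ)) (Rp P)
      = MvPolynomial.aeval (fun j => 2 * π * I * (ξ j : ℂ)) (P.map Complex.ofRealHom) := by
    rw [Rp, ← aeval_eq_eval]
    rw [show (MvPolynomial.aeval (fun j => ((ξ j : ℝ) : ℂ)))
        ((MvPolynomial.aeval (fun j => MvPolynomial.C (2 * π * I) * MvPolynomial.X j))
          (P.map Complex.ofRealHom))
      = ((MvPolynomial.aeval (R := ℂ) (fun j => ((ξ j : ℝ) : ℂ))).comp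
        (MvPolynomial.aeval (fun j => MvPolynomial.C (2 * π * I) * MvPolynomial.X j)))
          (P.map Complex.ofRealHom) from rfl, MvPolynomial.comp_aeval]
    have h3 : (fun i => (MvPolynomial.aeval (R := ℂ) (fun j => ((ξ j : ℝ) : ℂ)))
        (MvPolynomial.C (2 * π * I) * MvPolynomial.X i))
        = fun j => 2 * π * I * (ξ j : ℂ) := by
      funext i; simp
    rw [h3]
  rw [h1, h2, MvPolynomial.aeval_def, Algebra.algebraMap_self, MvPolynomial.eval₂_map]
  rfl

lemma Rp_ne_zero (P : MvPolynomial (Fin n) ℝ) (hP : P ≠ 0) : Rp P ≠ 0 := by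
  intro h
  have hmap : P.map Complex.ofRealHom ≠ 0 := by
    intro h'
    exact hP (MvPolynomial.map_injective _ Complex.ofReal_injective
      (by rw [h']; simp))
  apply hmap
  have hc : (2 * Complex.I * π : ℂ) ≠ 0 := by
    simp [Real.pi_ne_zero, Complex.I_ne_zero]
  have := congrArg (MvPolynomial.aeval
      (fun j => MvPolynomial.C (2 * π * I)⁻¹ * MvPolynomial.X j)) h
  rw [Rp] at this
  rw [show (MvPolynomial.aeval (fun j => MvPolynomial.C (2 * π * I)⁻¹ * MvPolynomial.X j))
      ((MvPolynomial.aeval (fun j => MvPolynomial.C (2 * π * I) * MvPolynomial.X j))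
        (P.map Complex.ofRealHom))
    = ((MvPolynomial.aeval (R := ℂ)
          (fun j => MvPolynomial.C (2 * π * I)⁻¹ * MvPolynomial.X j)).comp
        (MvPolynomial.aeval (fun j => MvPolynomial.C (2 * π * I) * MvPolynomial.X j)))
        (P.map Complex.ofRealHom) from rfl, MvPolynomial.comp_aeval] at this
  have h4 : (fun i => (MvPolynomial.aeval (R := ℂ)
      (fun j => MvPolynomial.C (2 * π * I)⁻¹ * MvPolynomial.X j))
      (MvPolynomial.C (2 * π * I) * MvPolynomial.X i))
      = fun i : Fin n => (MvPolynomial.X i : MvPolynomial (Fin n) ℂ) := by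
    funext i
    have h2pi : (2 * π * I : ℂ) ≠ 0 := by
      simp [Real.pi_ne_zero, Complex.I_ne_zero, Complex.ofReal_ne_zero]
    rw [map_mul, MvPolynomial.aeval_C, MvPolynomial.aeval_X, MvPolynomial.algebraMap_eq,
      ← mul_assoc, ← MvPolynomial.C_mul, mul_inv_cancel₀ h2pi]
    simp
  rw [h4, map_zero] at this
  rw [← this]
  exact (MvPolynomial.aeval_X_left_apply _).symm

lemma eval_real_zero (R : MvPolynomial (Fin n) ℂ)
    (h : ∀ x : Fin n → ℝ, MvPolynomial.eval (fun j => ((x j : ℝ) : ℂ)) R = 0) : R = 0 := by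
  classical
  set Sre : MvPolynomial (Fin n) ℝ :=
    ∑ d ∈ R.support, MvPolynomial.monomial d (R.coeff d).re with hSre
  set Sim : MvPolynomial (Fin n) ℝ :=
    ∑ d ∈ R.support, MvPolynomial.monomial d (R.coeff d).im with hSim
  have hcre : ∀ d, Sre.coeff d = (R.coeff d).re := by
    intro d
    rw [hSre, MvPolynomial.coeff_sum]
    simp only [MvPolynomial.coeff_monomial]
    rw [Finset.sum_ite_eq' R.support d fun d => (R.coeff d).re]
    by_cases hd : d ∈ R.support
    · simp [hd]
    · simp [hd, MvPolynomial.notMem_support_iff.1 hd]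
  have hcim : ∀ d, Sim.coeff d = (R.coeff d).im := by
    intro d
    rw [hSim, MvPolynomial.coeff_sum]
    simp only [MvPolynomial.coeff_monomial]
    rw [Finset.sum_ite_eq' R.support d fun d => (R.coeff d).im]
    by_cases hd : d ∈ R.support
    · simp [hd]
    · simp [hd, MvPolynomial.notMem_support_iff.1 hd]
  have hdecomp : R = Sre.map Complex.ofRealHom
      + MvPolynomial.C I * Sim.map Complex.ofRealHom := by
    apply MvPolynomial.ext
    intro d
    rw [MvPolynomial.coeff_add, MvPolynomial.coeff_C_mul, MvPolynomial.coeff_map,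
      MvPolynomial.coeff_map, hcre, hcim]
    rw [mul_comm]
    exact (Complex.re_add_im _).symm
  have hmapev : ∀ (S : MvPolynomial (Fin n) ℝ) (x : Fin n → ℝ),
      MvPolynomial.eval (fun j => ((x j : ℝ) : ℂ)) (S.map Complex.ofRealHom)
        = ((MvPolynomial.eval x S : ℝ) : ℂ) := by
    intro S x
    rw [MvPolynomial.eval_map]
    have := MvPolynomial.eval₂_comp_left Complex.ofRealHom (RingHom.id ℝ) x S
    rw [RingHom.comp_id] at this
    rw [show (fun j => ((x j : ℝ) : ℂ)) = (⇑Complex.ofRealHom ∘ x) from rfl, ← this]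
    rfl
  have hzero : ∀ x : Fin n → ℝ, MvPolynomial.eval x Sre = 0 ∧ MvPolynomial.eval x Sim = 0 := by
    intro x
    have h0 := h x
    rw [hdecomp] at h0
    rw [MvPolynomial.eval_add, MvPolynomial.eval_mul, MvPolynomial.eval_C,
      hmapev, hmapev] at h0
    constructor
    · have := congrArg Complex.re h0
      simpa using this
    · have := congrArg Complex.im h0
      simpa using this
  have hre0 : Sre = 0 := MvPolynomial.funext fun x => by
    rw [(hzero x).1, map_zero]
  have him0 : Sim = 0 := MvPolynomial.funext fun x => by
    rw [(hzero x).2, map_zero]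
  rw [hdecomp, hre0, him0]
  simp

lemma eval_zero_of_ball (R : MvPolynomial (Fin n) ℂ) (ξ₀ : E n) (ε : ℝ) (hε : 0 < ε)
    (h : ∀ ξ : E n, dist ξ ξ₀ < ε → MvPolynomial.eval (fun j => ((ξ j : ℝ) : ℂ)) R = 0) :
    ∀ x : Fin n → ℝ, MvPolynomial.eval (fun j => ((x j : ℝ) : ℂ)) R = 0 := by
  intro y
  set y' : E n := WithLp.toLp 2 y with hy'
  set N : ℝ := ‖y' - ξ₀‖ with hN
  have hN0 : 0 ≤ N := norm_nonneg _
  set δ : ℝ := ε / (N + 1) with hδ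
  have hδ0 : 0 < δ := div_pos hε (by linarith)
  set q : Polynomial ℂ := MvPolynomial.aeval
    (fun j => Polynomial.C ((ξ₀ j : ℝ) : ℂ)
      + Polynomial.C (((y j : ℝ) : ℂ) - ((ξ₀ j : ℝ) : ℂ)) * Polynomial.X) R with hq
  have hqev : ∀ t : ℝ, q.eval ((t : ℝ) : ℂ)
      = MvPolynomial.eval (fun j => ((ξ₀ j + t * (y j - ξ₀ j) : ℝ) : ℂ)) R := by
    intro t
    have h1 : q.eval ((t : ℝ) : ℂ) = Polynomial.aeval ((t : ℝ) : ℂ) q := by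
      rw [Polynomial.coe_aeval_eq_eval]
    rw [h1, hq]
    rw [show (Polynomial.aeval ((t : ℝ) : ℂ))
        ((MvPolynomial.aeval (fun j => Polynomial.C ((ξ₀ j : ℝ) : ℂ)
          + Polynomial.C (((y j : ℝ) : ℂ) - ((ξ₀ j : ℝ) : ℂ)) * Polynomial.X)) R)
      = ((Polynomial.aeval ((t : ℝ) : ℂ)).comp
          (MvPolynomial.aeval (fun j => Polynomial.C ((ξ₀ j : ℝ) : ℂ)
            + Polynomial.C (((y j : ℝ) : ℂ) - ((ξ₀ j : ℝ) : ℂ)) * Polynomial.X))) R from rfl,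
      MvPolynomial.comp_aeval]
    rw [← aeval_eq_eval]
    have harg : (fun i => (Polynomial.aeval ((t : ℝ) : ℂ)) (Polynomial.C ((ξ₀ i : ℝ) : ℂ)
        + Polynomial.C (((y i : ℝ) : ℂ) - ((ξ₀ i : ℝ) : ℂ)) * Polynomial.X))
        = fun j => ((ξ₀ j + t * (y j - ξ₀ j) : ℝ) : ℂ) := by
      funext i
      push_cast
      simp
      ring
    rw [harg]
  have hroot : ∀ t : ℝ, t ∈ Set.Ioo (-δ) δ → q.IsRoot ((t : ℝ) : ℂ) := by
    intro t ht
    have habs : |t| < δ := abs_lt.2 ⟨ht.1, ht.2⟩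
    set ξ : E n := ξ₀ + t • (y' - ξ₀) with hξ
    have hdist : dist ξ ξ₀ < ε := by
      rw [hξ, dist_eq_norm, add_sub_cancel_left, norm_smul, Real.norm_eq_abs]
      calc |t| * N ≤ |t| * (N + 1) := by nlinarith [abs_nonneg t]
        _ < δ * (N + 1) := by nlinarith
        _ = ε := by rw [hδ]; field_simp
    have hcoord : (fun j => ((ξ j : ℝ) : ℂ))
        = fun j => ((ξ₀ j + t * (y j - ξ₀ j) : ℝ) : ℂ) := by
      funext j
      have hxj : ξ j = ξ₀ j + t * (y j - ξ₀ j) := by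
        rw [hξ, PiLp.add_apply, PiLp.smul_apply, PiLp.sub_apply, smul_eq_mul, hy']
      rw [hxj]
    have h0 := h ξ hdist
    rw [hcoord] at h0
    rw [Polynomial.IsRoot, hqev t]
    exact h0
  have hq0 : q = 0 := by
    apply Polynomial.eq_zero_of_infinite_isRoot
    apply Set.Infinite.mono (s := (fun t : ℝ => ((t : ℝ) : ℂ)) '' Set.Ioo (-δ) δ)
    · rintro z ⟨t, ht, rfl⟩
      exact hroot t ht
    · exact Set.Infinite.image (Complex.ofReal_injective.injOn)
        (Set.Ioo_infinite (by linarith))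
  have hfin := hqev 1
  rw [hq0] at hfin
  simp only [Polynomial.eval_zero] at hfin
  rw [show (fun j => ((y j : ℝ) : ℂ)) = fun j => ((ξ₀ j + 1 * (y j - ξ₀ j) : ℝ) : ℂ) by
    funext j; norm_num]
  exact hfin.symm

/-- a nonzero constant-coefficient linear differential operator has no
nonzero smooth compactly supported solutions. -/
theorem eq_zero_of_constCoeffPDE {n : ℕ} (P : MvPolynomial (Fin n) ℝ) (hP : P ≠ 0)
    (f : EuclideanSpace ℝ (Fin n) → ℝ) (hf : ContDiff ℝ (⊤ : ℕ∞) f)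
    (hsupp : HasCompactSupport f)
    (hpde : ∀ x, ∑ k ∈ P.support, P.coeff k * mpd (fun j => k j) f x = 0) :
    f = 0 := by
  classical
  set F : E n → ℂ := fun x => ((f x : ℝ) : ℂ) with hF
  have hFc : Continuous F := (nice_ofReal hf).continuous
  have hFs : HasCompactSupport F := hsupp.comp_left (g := fun r : ℝ => (r : ℂ)) rfl
  have hFi : Integrable F := hFc.integrable_of_hasCompactSupport hFs
  have key : ∀ ξ : E n, Qp P ξ * 𝓕 F ξ = 0 := by
    intro ξ
    have hsum : (fun x => ∑ k ∈ P.support,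
        ((P.coeff k : ℝ) : ℂ) * ((mpd (fun j => k j) f x : ℝ) : ℂ)) = (0 : E n → ℂ) := by
      funext x
      show _ = (0 : ℂ)
      rw [show (0 : ℂ) = ((0 : ℝ) : ℂ) from rfl, ← hpde x]
      push_cast
      rfl
    have h1 : 𝓕 (fun x => ∑ k ∈ P.support,
        ((P.coeff k : ℝ) : ℂ) * ((mpd (fun j => k j) f x : ℝ) : ℂ)) ξ = 0 := by
      rw [hsum]
      simp [Real.fourier_eq]
    rw [fourier_sum _ _ (fun k _ => by
      have hnice := fold_nice hf hsupp (fun j => k j) (List.finRange n)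
      have : Integrable (fun x => ((mpd (fun j => k j) f x : ℝ) : ℂ)) :=
        ((nice_ofReal hnice.1).continuous).integrable_of_hasCompactSupport
          (hnice.2.comp_left (g := fun r : ℝ => (r : ℂ)) rfl)
      exact this.const_mul _)] at h1
    have h2 : ∀ k ∈ P.support,
        𝓕 (fun x => ((P.coeff k : ℝ) : ℂ) * ((mpd (fun j => k j) f x : ℝ) : ℂ)) ξ
          = ((P.coeff k : ℝ) : ℂ) * ((∏ j, (2 * π * I * (ξ j : ℂ)) ^ (k j)) * 𝓕 F ξ) := by
      intro k _
      rw [fourier_const_mul, fourier_mpd hf hsupp]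
    rw [Finset.sum_congr rfl h2] at h1
    rw [← h1, Qp, Finset.sum_mul]
    congr 1
    funext k
    ring
  have hQzero : 𝓕 F = 0 := by
    by_contra hne
    have hex : ∃ ξ₁ : E n, 𝓕 F ξ₁ ≠ 0 := by
      by_contra hall
      push_neg at hall
      exact hne (funext hall)
    obtain ⟨ξ₁, hξ₁⟩ := hex
    have hcont : Continuous (𝓕 F) :=
      VectorFourier.fourierIntegral_continuous Real.continuous_fourierChar
        (by exact continuous_inner) hFi
    have hopen : IsOpen {ξ : E n | 𝓕 F ξ ≠ 0} :=
      isOpen_compl_singleton.preimage hcont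
    obtain ⟨ε, hε, hball⟩ := Metric.isOpen_iff.1 hopen ξ₁ hξ₁
    have hQball : ∀ ξ : E n, dist ξ ξ₁ < ε →
        MvPolynomial.eval (fun j => ((ξ j : ℝ) : ℂ)) (Rp P) = 0 := by
      intro ξ hd
      have hmem : ξ ∈ {ξ : E n | 𝓕 F ξ ≠ 0} := hball (Metric.mem_ball.2 hd)
      rw [← Qp_eq_eval]
      rcases mul_eq_zero.1 (key ξ) with h | h
      · exact h
      · exact absurd h hmem
    have hall := eval_zero_of_ball (Rp P) ξ₁ ε hε hQball
    exact Rp_ne_zero P hP (eval_real_zero (Rp P) hall)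
  have hFzero : F = 0 := by
    have hinv := hFc.fourierInv_fourier_eq hFi (by rw [hQzero]; exact integrable_zero _ _ _)
    rw [hQzero] at hinv
    rw [← hinv]
    funext ξ
    simp [Real.fourierInv_eq]
  funext x
  show f x = (0 : ℝ)
  have h0 : ((f x : ℝ) : ℂ) = 0 := by
    have : F x = 0 := by rw [hFzero]; rfl
    simpa [hF] using this
  exact_mod_cast h0
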